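/- arXiv:0706.0362 — 2 statements merged into one kernel-verified Lean document; each statement's English description precedes it below -/
import Mathlib

section
/- Adopt the standing setup: Λ a connected row-finite k-graph with no sources, c : Λ → G a cocycle, H_n a descending chain of finite-index normal subgroups with H_1 = G, G_n = G/H_n, c_n(λ) = c(λ)H_n, Λ_n = Λ ×_{c_n} G_n and coverings p_n(λ, g) = (λ, q_n(g)), and let T = tgrphlim(Λ_n; p_n) be the tower (k+1)-graph. Fix x ∈ Λ^∞ and g = (g_n)_{n≥1} ∈ varprojlim(G_n, q_n), and for each n let (x, g_n) ∈ Λ_n^∞ be the unique infinite path with (x, g_n)(0,m) = (x(0,m), c_n(x(0,m))^{-1} g_n) for all m ∈ ℕ^k. Then there is a unique infinite path x^g ∈ T^∞ such that x^g(0, (m,0)) = ι_1(x(0,m)) for all m ∈ ℕ^k and x^g((n−1)e_{k+1}) is the vertex (x(0), g_n) ∈ Λ_n^0 for all n ≥ 1. Moreover σ^{(n−1)e_{k+1}}(x^g)(0, (m,0)) = ι_n((x, g_n)(0,m)) for all m ∈ ℕ^k and n ≥ 1. -/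
open CategoryTheory

attribute [local instance 2000] Preorder.smallCategory

/-- A `k`-graph: a small category `Λ` equipped with a degree functor `d : Λ → ℕᵏ`
satisfying the unique factorisation property.  Morphisms point from the range of a path
to its source, so that `f ≫ g` corresponds to the composition `fg` of paths in the
`k`-graph literature (with `r (f ≫ g) = r f` and `s (f ≫ g) = s g`). -/
structure KGraph (k : ℕ) (Λ : Type) [SmallCategory Λ] : Type where
  deg : ∀ {a b : Λ}, (a ⟶ b) → Fin k → ℕ
  deg_id : ∀ a : Λ, deg (𝟙 a) = 0
  deg_comp : ∀ {a b c : Λ} (f : a ⟶ b) (g : b ⟶ c), deg (f ≫ g) = deg f + deg g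
  factor : ∀ {a b : Λ} (f : a ⟶ b) (m n : Fin k → ℕ), deg f = m + n →
    ∃! t : Σ c : Λ, (a ⟶ c) × (c ⟶ b),
      deg t.2.1 = m ∧ deg t.2.2 = n ∧ t.2.1 ≫ t.2.2 = f

/-- An infinite path in a `k`-graph: a degree-preserving functor `Ω_k → Λ`, where `Ω_k`
is realised as the preorder category on `ℕᵏ = Fin k → ℕ`; the morphism `(p, q)` (for
`p ≤ q`) is `homOfLE h : p ⟶ q` and must be sent to a path of degree `q - p`.
The range of the path is `P.obj 0`. -/
structure InfPath {k : ℕ} {Λ : Type} [SmallCategory Λ] (KG : KGraph k Λ) : Type where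
  P : (Fin k → ℕ) ⥤ Λ
  deg_eq : ∀ {p q : Fin k → ℕ} (h : p ≤ q), KG.deg (P.map (homOfLE h)) = q - p

/-- Translation by `n` on `ℕᵏ`, as a functor. -/
def transFunctor (k : ℕ) (n : Fin k → ℕ) : (Fin k → ℕ) ⥤ (Fin k → ℕ) where
  obj p := p + n
  map f := homOfLE (add_le_add (leOfHom f) (le_refl n))
  map_id _ := rfl
  map_comp _ _ := rfl

/-- The shift `σⁿ x` of an infinite path `x`, satisfying `σⁿ x (p, q) = x (p + n, q + n)`. -/
def InfPath.shift {k : ℕ} {Λ : Type} [SmallCategory Λ] {KG : KGraph k Λ}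
    (x : InfPath KG) (n : Fin k → ℕ) : InfPath KG where
  P := transFunctor k n ⋙ x.P
  deg_eq {p q} h := by
    have h1 : (transFunctor k n ⋙ x.P).map (homOfLE h)
        = x.P.map (homOfLE (add_le_add h (le_refl n))) := rfl
    show KG.deg (x.P.map (homOfLE (add_le_add h (le_refl n)))) = q - p
    rw [x.deg_eq]
    funext i
    simp only [Pi.sub_apply, Pi.add_apply]
    omega

/-- A cocycle on a `k`-graph: a functor `c : Λ → G` into a group `G` (viewed as a category
with one object).  With our orientation of arrows, `c (f ≫ g) = c f * c g`. -/
structure Cocycle (Λ : Type) [SmallCategory Λ] (G : Type) [Group G] : Type where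
  c : ∀ {a b : Λ}, (a ⟶ b) → G
  map_id : ∀ a : Λ, c (𝟙 a) = 1
  map_comp : ∀ {a b d : Λ} (f : a ⟶ b) (g : b ⟶ d), c (f ≫ g) = c f * c g

/-- The skew product `Λ ×_c G`: vertices are pairs `(v, g)`, and `(λ, g)` is a path with
source `(s λ, g)` and range `(r λ, c(λ) g)`.  Here a morphism from `(a, h)` to `(b, g)` is
a path `f : a ⟶ b` with `c f * g = h`. -/
structure Skew {Λ : Type} [SmallCategory Λ] {G : Type} [Group G] (σ : Cocycle Λ G) : Type where
  base : Λ
  grp : G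

instance Skew.instCategory {Λ : Type} [SmallCategory Λ] {G : Type} [Group G]
    (σ : Cocycle Λ G) : SmallCategory (Skew σ) where
  Hom a b := {f : a.base ⟶ b.base // σ.c f * b.grp = a.grp}
  id a := ⟨𝟙 a.base, by rw [σ.map_id, one_mul]⟩
  comp f g := ⟨f.1 ≫ g.1, by rw [σ.map_comp, mul_assoc, g.2, f.2]⟩
  id_comp f := by apply Subtype.ext; exact Category.id_comp f.1
  comp_id f := by apply Subtype.ext; exact Category.comp_id f.1
  assoc f g h := by apply Subtype.ext; exact Category.assoc f.1 g.1 h.1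

/-- The `k`-graph structure on the skew product `Λ ×_c G`. -/
def skewKGraph {k : ℕ} {Λ : Type} [SmallCategory Λ] (KG : KGraph k Λ) {G : Type} [Group G]
    (σ : Cocycle Λ G) : KGraph k (Skew σ) where
  deg f := KG.deg f.1
  deg_id a := KG.deg_id a.base
  deg_comp f g := KG.deg_comp f.1 g.1
  factor := by
    rintro a b f m n hmn
    obtain ⟨⟨c0, g0, h0⟩, ⟨hgm, hhn, hgh⟩, huniq⟩ := KG.factor f.1 m n hmn
    refine ⟨⟨⟨c0, (σ.c g0)⁻¹ * a.grp⟩, ⟨g0, mul_inv_cancel_left _ _⟩, ⟨h0, ?_⟩⟩,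
      ⟨hgm, hhn, Subtype.ext hgh⟩, ?_⟩
    · rw [← f.2, ← hgh, σ.map_comp, mul_assoc, inv_mul_cancel_left]
    · rintro ⟨⟨c1, x1⟩, ⟨g1, hg1⟩, ⟨h1, hh1⟩⟩ ⟨hm1, hn1, hcomp1⟩
      have hbase : (⟨c0, g0, h0⟩ : Σ c : Λ, (a.base ⟶ c) × (c ⟶ b.base)) = ⟨c1, g1, h1⟩ :=
        (huniq ⟨c1, g1, h1⟩ ⟨hm1, hn1, congrArg Subtype.val hcomp1⟩).symm
      obtain ⟨h1', h2'⟩ := Sigma.mk.inj_iff.mp hbase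
      subst h1'
      obtain ⟨h3', h4'⟩ := Prod.mk.inj (eq_of_heq h2')
      subst h3'
      subst h4'
      have hx : x1 = (σ.c g0)⁻¹ * a.grp := by rw [← hg1, inv_mul_cancel_left]
      subst hx
      rfl

/-- For `m ≤ n` and a descending chain `H` of normal subgroups, the canonical map
`G/Hₙ → G/Hₘ` (the map `q_{m,n}` induced by the projections `qᵢ`). -/
def quotDown {G : Type} [Group G] {H : ℕ → Subgroup G} [∀ i, (H i).Normal]
    (hH : Antitone H) {m n : ℕ} (h : m ≤ n) : G ⧸ H n →* G ⧸ H m :=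
  QuotientGroup.map _ _ (MonoidHom.id G) (fun _ hx => hH h hx)

lemma quotDown_mk {G : Type} [Group G] {H : ℕ → Subgroup G} [∀ i, (H i).Normal]
    (hH : Antitone H) {m n : ℕ} (h : m ≤ n) (g : G) :
    quotDown hH h (g : G ⧸ H n) = (g : G ⧸ H m) := rfl

lemma quotDown_refl {G : Type} [Group G] {H : ℕ → Subgroup G} [∀ i, (H i).Normal]
    (hH : Antitone H) (n : ℕ) (z : G ⧸ H n) : quotDown hH (le_refl n) z = z := by
  induction z using QuotientGroup.induction_on with
  | _ g => rfl

lemma quotDown_comp {G : Type} [Group G] {H : ℕ → Subgroup G} [∀ i, (H i).Normal]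
    (hH : Antitone H) {l m n : ℕ} (h1 : l ≤ m) (h2 : m ≤ n) (z : G ⧸ H n) :
    quotDown hH h1 (quotDown hH h2 z) = quotDown hH (h1.trans h2) z := by
  induction z using QuotientGroup.induction_on with
  | _ g => rfl

/-- Total version of `quotDown` (junk value `1` when `m > n`). -/
def qd {G : Type} [Group G] {H : ℕ → Subgroup G} [∀ i, (H i).Normal]
    (hH : Antitone H) (m n : ℕ) (z : G ⧸ H n) : G ⧸ H m :=
  if h : m ≤ n then quotDown hH h z else 1

/-- The tower `(k+1)`-graph `T = tgrphlim (Λₙ; pₙ)` of [KPS] for the system of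
skew-product coverings `pₙ : Λ ×_{c_{n+1}} G/H_{n+1} → Λ ×_{c_n} G/Hₙ`.  Its vertices are
the disjoint union of the vertices `(v, gHₙ)` of the skew products `Λₙ = Λ ×_{c_n} G/Hₙ`;
a morphism of degree `(m, j)` from a level-`n` vertex is a path `λ ∈ Λₙ^m` together with a
vertex `w` of `Λ_{n+j}` lying over its source.  (Here such a morphism from `(n, v, g)` to
`(n', v', g')` is encoded as a path `f : v ⟶ v'` of `Λ` such that `n ≤ n'` and
`c_n(f)·q_{n,n'}(g') = g` in `G/Hₙ`.) -/
structure TObj {Λ : Type} [SmallCategory Λ] {G : Type} [Group G] {H : ℕ → Subgroup G}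
    [∀ i, (H i).Normal] (c : Cocycle Λ G) (hH : Antitone H) : Type where
  lvl : ℕ
  vert : Λ
  grp : G ⧸ H lvl

instance TObj.instCategory {Λ : Type} [SmallCategory Λ] {G : Type} [Group G]
    {H : ℕ → Subgroup G} [∀ i, (H i).Normal] (c : Cocycle Λ G) (hH : Antitone H) :
    SmallCategory (TObj c hH) where
  Hom a b := {f : a.vert ⟶ b.vert //
    a.lvl ≤ b.lvl ∧ (↑(c.c f) : G ⧸ H a.lvl) * qd hH a.lvl b.lvl b.grp = a.grp}
  id a := ⟨𝟙 a.vert, le_rfl, by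
    rw [c.map_id, qd, dif_pos le_rfl, quotDown_refl]
    exact one_mul a.grp⟩
  comp {a b c'} f g := ⟨f.1 ≫ g.1, f.2.1.trans g.2.1, by
    obtain ⟨hab, hf⟩ := f.2
    obtain ⟨hbc, hg⟩ := g.2
    simp only [qd, dif_pos hbc] at hg
    simp only [qd, dif_pos hab] at hf
    simp only [qd, dif_pos (hab.trans hbc)]
    have h1 := congrArg (quotDown hH hab) hg
    rw [map_mul, quotDown_mk, quotDown_comp] at h1
    rw [c.map_comp]
    calc (↑(c.c f.1 * c.c g.1) : G ⧸ H a.lvl) * quotDown hH (hab.trans hbc) c'.grp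
        = ↑(c.c f.1) * (↑(c.c g.1) * quotDown hH (hab.trans hbc) c'.grp) := by
          rw [QuotientGroup.mk_mul, mul_assoc]
      _ = ↑(c.c f.1) * quotDown hH hab b.grp := by rw [h1]
      _ = a.grp := hf⟩
  id_comp f := by apply Subtype.ext; exact Category.id_comp f.1
  comp_id f := by apply Subtype.ext; exact Category.comp_id f.1
  assoc f g h := by apply Subtype.ext; exact Category.assoc f.1 g.1 h.1

/-- The `(k+1)`-graph structure on the tower graph: the degree of a morphism is
`(d(λ), j)` where `j` is the level difference. -/
def towerKG {k : ℕ} {Λ : Type} [SmallCategory Λ] (KG : KGraph k Λ) {G : Type} [Group G]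
    {H : ℕ → Subgroup G} [∀ i, (H i).Normal] (c : Cocycle Λ G) (hH : Antitone H) :
    KGraph (k + 1) (TObj c hH) where
  deg {a b} f := Fin.snoc (KG.deg f.1) (b.lvl - a.lvl)
  deg_id a := by
    funext i
    refine Fin.lastCases ?_ (fun i => ?_) i
    · simp [Fin.snoc]
    · have h0 : (𝟙 a : a ⟶ a).1 = 𝟙 a.vert := rfl
      have : KG.deg (𝟙 a.vert) = 0 := KG.deg_id a.vert
      simp [Fin.snoc, h0, this]
  deg_comp {a b c'} f g := by
    funext i
    refine Fin.lastCases ?_ (fun i => ?_) i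
    · have h1 := f.2.1
      have h2 := g.2.1
      simp only [Fin.snoc_last, Pi.add_apply]
      omega
    · have h0 : (f ≫ g : a ⟶ c').1 = f.1 ≫ g.1 := rfl
      have : KG.deg (f.1 ≫ g.1) = KG.deg f.1 + KG.deg g.1 := KG.deg_comp f.1 g.1
      simp [Fin.snoc, h0, this]
  factor := by
    rintro a b f m n hmn
    have hble := f.2.1
    have hcond := f.2.2
    have hhead : KG.deg f.1 = (fun i => m (Fin.castSucc i)) + (fun i => n (Fin.castSucc i)) := by
      funext i
      have h := congrFun hmn (Fin.castSucc i)
      simpa [Fin.snoc] using h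
    have hlast : b.lvl - a.lvl = m (Fin.last k) + n (Fin.last k) := by
      have h := congrFun hmn (Fin.last k)
      simpa [Fin.snoc] using h
    obtain ⟨⟨c0, g0, h0⟩, ⟨hg, hh, hgh⟩, uniq⟩ :=
      KG.factor f.1 (fun i => m (Fin.castSucc i)) (fun i => n (Fin.castSucc i)) hhead
    have hmidle : a.lvl + m (Fin.last k) ≤ b.lvl := by omega
    refine ⟨⟨⟨a.lvl + m (Fin.last k), c0,
        ↑(c.c h0) * qd hH (a.lvl + m (Fin.last k)) b.lvl b.grp⟩,
        ⟨g0, Nat.le_add_right _ _, ?_⟩, ⟨h0, hmidle, rfl⟩⟩,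
      ⟨?_, ?_, Subtype.ext hgh⟩, ?_⟩
    · simp only [qd, dif_pos (Nat.le_add_right a.lvl (m (Fin.last k))), dif_pos hmidle,
        dif_pos hble]
      rw [map_mul, quotDown_mk, quotDown_comp]
      rw [← mul_assoc, ← QuotientGroup.mk_mul, ← c.map_comp, hgh]
      simp only [qd, dif_pos hble] at hcond
      exact hcond
    · funext i
      refine Fin.lastCases ?_ (fun i => ?_) i
      · simp only [Fin.snoc_last]
        omega
      · have h := congrFun hg i
        simpa [Fin.snoc] using h
    · funext i
      refine Fin.lastCases ?_ (fun i => ?_) i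
      · simp only [Fin.snoc_last]
        omega
      · have h := congrFun hh i
        simpa [Fin.snoc] using h
    · rintro ⟨⟨L, V, Z⟩, ⟨g1, hle1, hc1⟩, ⟨h1, hle2, hc2⟩⟩ ⟨dm, dn, dcomp⟩
      dsimp only at hle1 hle2 hc1 hc2 dm dn
      have hcompval : g1 ≫ h1 = f.1 := congrArg Subtype.val dcomp
      have hdg1 : KG.deg g1 = fun i => m (Fin.castSucc i) := by
        funext i
        have h := congrFun dm (Fin.castSucc i)
        simpa [Fin.snoc] using h
      have hdh1 : KG.deg h1 = fun i => n (Fin.castSucc i) := by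
        funext i
        have h := congrFun dn (Fin.castSucc i)
        simpa [Fin.snoc] using h
      have hLm : L - a.lvl = m (Fin.last k) := by
        have h := congrFun dm (Fin.last k)
        simpa [Fin.snoc] using h
      have hL : L = a.lvl + m (Fin.last k) := by omega
      subst hL
      have hbase : (⟨c0, g0, h0⟩ : Σ c' : Λ, (a.vert ⟶ c') × (c' ⟶ b.vert)) = ⟨V, g1, h1⟩ :=
        (uniq ⟨V, g1, h1⟩ ⟨hdg1, hdh1, hcompval⟩).symm
      obtain ⟨h1', h2'⟩ := Sigma.mk.inj_iff.mp hbase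
      subst h1'
      obtain ⟨h3', h4'⟩ := Prod.mk.inj (eq_of_heq h2')
      subst h3'
      subst h4'
      have hZ : Z = ↑(c.c h0) * qd hH (a.lvl + m (Fin.last k)) b.lvl b.grp := hc2.symm
      subst hZ
      rfl

/-- The induced cocycle `c_N : Λ → G/N`, `c_N(λ) = c(λ)N`. -/
def cq {Λ : Type} [SmallCategory Λ] {G : Type} [Group G] (c : Cocycle Λ G)
    (N : Subgroup G) [N.Normal] : Cocycle Λ (G ⧸ N) where
  c f := ↑(c.c f)
  map_id a := by
    show ((c.c (𝟙 a) : G) : G ⧸ N) = 1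
    rw [c.map_id]; rfl
  map_comp f g := by
    show ((c.c (f ≫ g) : G) : G ⧸ N) = ↑(c.c f) * ↑(c.c g)
    rw [c.map_comp]; rfl

/-- `IsXG KG c hH x g y` says that `y = x^g`: `y` is the infinite path of the tower
`(k+1)`-graph determined by `x ∈ Λ^∞` and `g = (gₙ) ∈ varprojlim (G/Hₙ, qₙ)`, i.e.
`y(0, (m, 0)) = ι₁(x(0, m))` for all `m ∈ ℕᵏ` (where `ι₁` embeds `Λ ≅ Λ₁` into the tower)
and `y(n·e_{k+1})` is the vertex `(x(0), gₙ)` of `Λₙ` for all `n`. -/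
def IsXG {k : ℕ} {Λ : Type} [SmallCategory Λ] (KG : KGraph k Λ) {G : Type} [Group G]
    {H : ℕ → Subgroup G} [∀ i, (H i).Normal] (c : Cocycle Λ G) (hH : Antitone H)
    (x : InfPath KG) (g : ∀ i, G ⧸ H i) (y : InfPath (towerKG KG c hH)) : Prop :=
  (∀ m : Fin k → ℕ,
    (y.P.obj (Fin.snoc m 0)).lvl = 0 ∧
    (y.P.obj (Fin.snoc m 0)).vert = x.P.obj m ∧
    HEq (y.P.map (homOfLE (zero_le : 0 ≤ (Fin.snoc m 0 : Fin (k + 1) → ℕ)))).1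
        (x.P.map (homOfLE (zero_le : 0 ≤ m)))) ∧
  (∀ n : ℕ, y.P.obj (Fin.snoc (0 : Fin k → ℕ) n) = ⟨n, x.P.obj 0, g n⟩)


/-! ### Auxiliary lemmas -/

section Aux

variable {k : ℕ} {Λ : Type} [SmallCategory Λ]

lemma KGraph.deg_eqToHom (KG : KGraph k Λ) {a b : Λ} (h : a = b) :
    KG.deg (eqToHom h) = 0 := by subst h; exact KG.deg_id a

lemma KGraph.factor_unique (KG : KGraph k Λ) {a b : Λ} (f : a ⟶ b)
    {C C' : Λ} (g : a ⟶ C) (h : C ⟶ b) (g' : a ⟶ C') (h' : C' ⟶ b)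
    (hdg : KG.deg g = KG.deg g') (hdh : KG.deg h = KG.deg h')
    (hgh : g ≫ h = f) (hgh' : g' ≫ h' = f) :
    C = C' ∧ HEq g g' ∧ HEq h h' := by
  obtain ⟨t, _, huniq⟩ := KG.factor f (KG.deg g) (KG.deg h)
    (by rw [← hgh, KG.deg_comp])
  have h1 : (⟨C, g, h⟩ : Σ c : Λ, (a ⟶ c) × (c ⟶ b)) = t :=
    huniq _ ⟨rfl, rfl, hgh⟩
  have h2 : (⟨C', g', h'⟩ : Σ c : Λ, (a ⟶ c) × (c ⟶ b)) = t :=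
    huniq _ ⟨hdg.symm, hdh.symm, hgh'⟩
  obtain ⟨hc, hp⟩ := Sigma.mk.inj_iff.mp (h1.trans h2.symm)
  subst hc
  obtain ⟨hg2, hh2⟩ := Prod.mk.inj (eq_of_heq hp)
  exact ⟨rfl, heq_of_eq hg2, heq_of_eq hh2⟩

lemma KGraph.deg_zero_eq (KG : KGraph k Λ) {a b : Λ} (f : a ⟶ b)
    (h0 : KG.deg f = 0) : b = a ∧ HEq f (𝟙 a) := by
  have h := KG.factor_unique f f (𝟙 b) (𝟙 a) f
    (by rw [h0, KG.deg_id]) (by rw [h0, KG.deg_id])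
    (Category.comp_id f) (Category.id_comp f)
  exact ⟨h.1, h.2.1⟩

lemma heq_id_comp {a b c : Λ} (hab : a = b) (e : a ⟶ b) (he : HEq e (𝟙 a))
    (f : b ⟶ c) : HEq (e ≫ f) f := by
  subst hab
  exact heq_of_eq (by rw [eq_of_heq he, Category.id_comp])

lemma heq_comp_id {a b c : Λ} (hbc : b = c) (e : b ⟶ c) (he : HEq e (𝟙 b))
    (f : a ⟶ b) : HEq (f ≫ e) f := by
  subst hbc
  exact heq_of_eq (by rw [eq_of_heq he, Category.comp_id])

lemma InfPath.ext'' {KG : KGraph k Λ} {w w' : InfPath KG}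
    (hobj : ∀ m, w.P.obj m = w'.P.obj m)
    (hmap : ∀ m, HEq (w.P.map (homOfLE (zero_le (a := m)))) (w'.P.map (homOfLE (zero_le (a := m))))) :
    w = w' := by
  have hP : w.P = w'.P := by
    refine CategoryTheory.Functor.ext hobj ?_
    intro X Y f
    have hf : f = homOfLE (leOfHom f) := Subsingleton.elim _ _
    have hcw : w.P.map (homOfLE (zero_le (a := X))) ≫ w.P.map f
        = w.P.map (homOfLE (zero_le (a := Y))) := by
      rw [← w.P.map_comp]; exact congrArg w.P.map (Subsingleton.elim _ _)
    have hcw' : w'.P.map (homOfLE (zero_le (a := X))) ≫ w'.P.map f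
        = w'.P.map (homOfLE (zero_le (a := Y))) := by
      rw [← w'.P.map_comp]; exact congrArg w'.P.map (Subsingleton.elim _ _)
    have e := (conj_eqToHom_iff_heq _ _ (hobj 0) (hobj Y)).mpr (hmap Y)
    have hgh' : (eqToHom (hobj 0) ≫ w'.P.map (homOfLE (zero_le (a := X))))
        ≫ (w'.P.map f ≫ eqToHom (hobj Y).symm)
        = w.P.map (homOfLE (zero_le (a := Y))) := by
      rw [Category.assoc, ← Category.assoc (w'.P.map (homOfLE (zero_le (a := X)))), hcw']
      exact e.symm
    have hu := KG.factor_unique (w.P.map (homOfLE (zero_le (a := Y))))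
      (w.P.map (homOfLE (zero_le (a := X)))) (w.P.map f)
      (eqToHom (hobj 0) ≫ w'.P.map (homOfLE (zero_le (a := X))))
      (w'.P.map f ≫ eqToHom (hobj Y).symm)
      (by rw [w.deg_eq, KG.deg_comp, KG.deg_eqToHom, w'.deg_eq, zero_add])
      (by rw [hf, w.deg_eq, KG.deg_comp, KG.deg_eqToHom, w'.deg_eq, add_zero])
      hcw hgh'
    have := (conj_eqToHom_iff_heq (w.P.map f)
      (w'.P.map f ≫ eqToHom (hobj Y).symm) (hobj X) rfl).mpr hu.2.2
    rw [this]
    simp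
  obtain ⟨P, dP⟩ := w
  obtain ⟨P', dP'⟩ := w'
  dsimp only at hP
  subst hP
  rfl

lemma InfPath.map_heq {KG : KGraph k Λ} (x : InfPath KG)
    {p q p' q' : Fin k → ℕ} (hp : p = p') (hq : q = q')
    (h : p ≤ q) (h' : p' ≤ q') :
    HEq (x.P.map (homOfLE h)) (x.P.map (homOfLE h')) := by
  subst hp; subst hq
  exact heq_of_eq (congrArg x.P.map (Subsingleton.elim _ _))

lemma Cocycle.c_congr {G : Type} [Group G] (c : Cocycle Λ G)
    {a b a' b' : Λ} (ha : a = a') (hb : b = b')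
    {f : a ⟶ b} {f' : a' ⟶ b'} (h : HEq f f') : c.c f = c.c f' := by
  subst ha; subst hb; rw [eq_of_heq h]

lemma Skew.hom_heq {G : Type} [Group G] {σ : Cocycle Λ G}
    {a b a' b' : Skew σ} (ha : a = a') (hb : b = b')
    {f : a ⟶ b} {f' : a' ⟶ b'} (h : HEq f.1 f'.1) : HEq f f' := by
  subst ha; subst hb
  exact heq_of_eq (Subtype.ext (eq_of_heq h))

lemma TObj.hom_heq {G : Type} [Group G] {H : ℕ → Subgroup G} [∀ i, (H i).Normal]
    {c : Cocycle Λ G} {hH : Antitone H}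
    {a b a' b' : TObj c hH} (ha : a = a') (hb : b = b')
    {f : a ⟶ b} {f' : a' ⟶ b'} (h : HEq f.1 f'.1) : HEq f f' := by
  subst ha; subst hb
  exact heq_of_eq (Subtype.ext (eq_of_heq h))

lemma TObj.mk_congr {G : Type} [Group G] {H : ℕ → Subgroup G} [∀ i, (H i).Normal]
    {c : Cocycle Λ G} {hH : Antitone H}
    {n n' : ℕ} (hn : n = n') {v v' : Λ} (hv : v = v')
    {z : G ⧸ H n} {z' : G ⧸ H n'} (hz : HEq z z') :
    (⟨n, v, z⟩ : TObj c hH) = ⟨n', v', z'⟩ := by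
  subst hn; subst hv; rw [eq_of_heq hz]

lemma gchain {G : Type} [Group G] {H : ℕ → Subgroup G} [∀ i, (H i).Normal]
    (hH : Antitone H) (g : ∀ i, G ⧸ H i)
    (hg : ∀ i, quotDown hH (Nat.le_succ i) (g (i + 1)) = g i)
    {a b : ℕ} (h : a ≤ b) : quotDown hH h (g b) = g a := by
  induction b, h using Nat.le_induction with
  | base => exact quotDown_refl hH a (g a)
  | succ b hab ih => rw [← quotDown_comp hH hab (Nat.le_succ b), hg b, ih]

end Aux

section Constructions

variable {k : ℕ} {Λ : Type} [SmallCategory Λ] (KG : KGraph k Λ)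
  {G : Type} [Group G] (c : Cocycle Λ G)

/-- The infinite path `(x, γ)` of the skew product. -/
def skewPath (N : Subgroup G) [N.Normal] (x : InfPath KG) (γ : G ⧸ N) :
    InfPath (skewKGraph KG (cq c N)) where
  P :=
    { obj := fun m =>
        ⟨x.P.obj m, (↑(c.c (x.P.map (homOfLE (zero_le (a := m))))) : G ⧸ N)⁻¹ * γ⟩
      map := fun {p q} f => ⟨x.P.map f, by
        have hcomp : x.P.map (homOfLE (zero_le (a := p))) ≫ x.P.map f
            = x.P.map (homOfLE (zero_le (a := q))) := by
          rw [← x.P.map_comp]; exact congrArg x.P.map (Subsingleton.elim _ _)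
        have h1 : (↑(c.c (x.P.map (homOfLE (zero_le (a := p))))) : G ⧸ N)
            * ↑(c.c (x.P.map f)) = ↑(c.c (x.P.map (homOfLE (zero_le (a := q))))) := by
          rw [← QuotientGroup.mk_mul, ← c.map_comp, hcomp]
        show (↑(c.c (x.P.map f)) : G ⧸ N)
            * ((↑(c.c (x.P.map (homOfLE (zero_le (a := q))))) : G ⧸ N)⁻¹ * γ)
            = (↑(c.c (x.P.map (homOfLE (zero_le (a := p))))) : G ⧸ N)⁻¹ * γ
        rw [← h1]
        group⟩
      map_id := fun p => Subtype.ext (x.P.map_id p)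
      map_comp := fun f g => Subtype.ext (x.P.map_comp f g) }
  deg_eq {p q} h := x.deg_eq h

variable (H : ℕ → Subgroup G) [∀ i, (H i).Normal] (hH : Antitone H)
  (x : InfPath KG) (g : ∀ i, G ⧸ H i)
  (hg : ∀ i, quotDown hH (Nat.le_succ i) (g (i + 1)) = g i)

/-- The infinite path `x^g` of the tower `(k+1)`-graph. -/
def towerPath : InfPath (towerKG KG c hH) where
  P :=
    { obj := fun q => ⟨q (Fin.last k), x.P.obj (Fin.init q),
        (↑(c.c (x.P.map (homOfLE (zero_le (a := Fin.init q)))))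
          : G ⧸ H (q (Fin.last k)))⁻¹ * g (q (Fin.last k))⟩
      map := fun {p q} f =>
        ⟨x.P.map (homOfLE (fun i => leOfHom f (Fin.castSucc i) :
            Fin.init p ≤ Fin.init q)),
          leOfHom f (Fin.last k), by
          have hnp : p (Fin.last k) ≤ q (Fin.last k) := leOfHom f (Fin.last k)
          have hcomp : x.P.map (homOfLE (zero_le (a := Fin.init p)))
              ≫ x.P.map (homOfLE (fun i => leOfHom f (Fin.castSucc i) :
                  Fin.init p ≤ Fin.init q))
              = x.P.map (homOfLE (zero_le (a := Fin.init q))) := by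
            rw [← x.P.map_comp]; exact congrArg x.P.map (Subsingleton.elim _ _)
          have h1 : (↑(c.c (x.P.map (homOfLE (zero_le (a := Fin.init p)))))
                : G ⧸ H (p (Fin.last k)))
              * ↑(c.c (x.P.map (homOfLE (fun i => leOfHom f (Fin.castSucc i) :
                  Fin.init p ≤ Fin.init q))))
              = ↑(c.c (x.P.map (homOfLE (zero_le (a := Fin.init q))))) := by
            rw [← QuotientGroup.mk_mul]
            exact congrArg _ ((c.map_comp _ _).symm.trans (congrArg c.c hcomp))
          show (↑(c.c (x.P.map (homOfLE (fun i => leOfHom f (Fin.castSucc i) :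
                  Fin.init p ≤ Fin.init q)))) : G ⧸ H (p (Fin.last k)))
              * qd hH (p (Fin.last k)) (q (Fin.last k))
                ((↑(c.c (x.P.map (homOfLE (zero_le (a := Fin.init q)))))
                  : G ⧸ H (q (Fin.last k)))⁻¹ * g (q (Fin.last k)))
              = (↑(c.c (x.P.map (homOfLE (zero_le (a := Fin.init p)))))
                  : G ⧸ H (p (Fin.last k)))⁻¹ * g (p (Fin.last k))
          rw [qd, dif_pos hnp, map_mul, map_inv, quotDown_mk,
            gchain hH g hg hnp, ← h1]
          group⟩
      map_id := fun p => Subtype.ext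
        ((congrArg x.P.map (Subsingleton.elim _ _)).trans (x.P.map_id _))
      map_comp := fun f f' => Subtype.ext
        (((congrArg x.P.map (Subsingleton.elim _ _)).trans
          (x.P.map_comp _ _)))
      }
  deg_eq {p q} h := by
    show Fin.snoc (KG.deg (x.P.map (homOfLE _))) (q (Fin.last k) - p (Fin.last k))
        = q - p
    funext i
    refine Fin.lastCases ?_ (fun i => ?_) i
    · simp only [Fin.snoc_last, Pi.sub_apply]
    · rw [Fin.snoc_castSucc]
      refine (congrFun (x.deg_eq (fun i => h (Fin.castSucc i) : Fin.init p ≤ Fin.init q)) i).trans ?_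
      simp [Fin.init, Pi.sub_apply]

lemma towerPath_obj_eq (q : Fin (k + 1) → ℕ) {n : ℕ} {m : Fin k → ℕ}
    (hn : q (Fin.last k) = n) (hm : Fin.init q = m) :
    (towerPath KG c H hH x g hg).P.obj q
      = ⟨n, x.P.obj m,
          (↑(c.c (x.P.map (homOfLE (zero_le (a := m))))) : G ⧸ H n)⁻¹ * g n⟩ := by
  subst hn; subst hm; rfl

lemma towerPath_map_val (p q : Fin (k + 1) → ℕ) (h : p ≤ q) :
    ((towerPath KG c H hH x g hg).P.map (homOfLE h)).1
      = x.P.map (homOfLE (fun i => h (Fin.castSucc i) :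
          Fin.init p ≤ Fin.init q)) := rfl

end Constructions

section Main

variable {k : ℕ} {Λ : Type} [SmallCategory Λ] (KG : KGraph k Λ)
  {G : Type} [Group G] (c : Cocycle Λ G)
  (H : ℕ → Subgroup G) [∀ i, (H i).Normal] (hH : Antitone H)
  (x : InfPath KG) (g : ∀ i, G ⧸ H i)
  (hg : ∀ i, quotDown hH (Nat.le_succ i) (g (i + 1)) = g i)

lemma TObj.grp_determined {a b : TObj c hH} (f : a ⟶ b)
    {n : ℕ} {v v' : Λ} {z : G ⧸ H n} (ha : a = ⟨n, v, z⟩)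
    (hbl : b.lvl = n) (hbv : b.vert = v')
    {f0 : v ⟶ v'} (hf : HEq f.1 f0) :
    b = ⟨n, v', (↑(c.c f0) : G ⧸ H n)⁻¹ * z⟩ := by
  subst ha
  obtain ⟨bl, bv, bz⟩ := b
  dsimp only at hbl hbv
  subst hbl; subst hbv
  have hf' : f.1 = f0 := eq_of_heq hf
  have hcond : (↑(c.c f.1) : G ⧸ H bl) * qd hH bl bl bz = z := f.2.2
  rw [hf', qd, dif_pos le_rfl, quotDown_refl] at hcond
  have hz : bz = (↑(c.c f0) : G ⧸ H bl)⁻¹ * z := by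
    rw [← hcond, inv_mul_cancel_left]
  rw [hz]

lemma towerPath_sat : IsXG KG c hH x g (towerPath KG c H hH x g hg) := by
  constructor
  · intro m
    have hn1 : (Fin.snoc m 0 : Fin (k + 1) → ℕ) (Fin.last k) = 0 := by simp
    have hobj := towerPath_obj_eq KG c H hH x g hg (Fin.snoc m 0)
      hn1 (Fin.init_snoc _ _)
    refine ⟨by rw [hobj], by rw [hobj], ?_⟩
    rw [towerPath_map_val]
    exact x.map_heq rfl (Fin.init_snoc _ _) _ _
  · intro n
    have hn2 : (Fin.snoc (0 : Fin k → ℕ) n : Fin (k + 1) → ℕ) (Fin.last k) = n := by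
      simp
    rw [towerPath_obj_eq KG c H hH x g hg (Fin.snoc (0 : Fin k → ℕ) n)
      hn2 (Fin.init_snoc _ _)]
    have h1 : x.P.map (homOfLE (zero_le (a := (0 : Fin k → ℕ)))) = 𝟙 _ :=
      (congrArg x.P.map (Subsingleton.elim _ _)).trans (x.P.map_id _)
    rw [h1, c.map_id]
    simp only [QuotientGroup.mk_one, inv_one, one_mul]

lemma tower_unique (y : InfPath (towerKG KG c hH)) (hy : IsXG KG c hH x g y) :
    y = towerPath KG c H hH x g hg := by
  obtain ⟨hy1, hy2⟩ := hy
  have main : ∀ qq : Fin (k + 1) → ℕ,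
      y.P.obj qq = (towerPath KG c H hH x g hg).P.obj qq ∧
      HEq (y.P.map (homOfLE (zero_le (a := qq)))).1
          (x.P.map (homOfLE (zero_le (a := Fin.init qq)))) := by
    intro qq
    have h1m := hy1 (Fin.init qq)
    have le2 : Fin.snoc (Fin.init qq) 0 ≤ qq := by
      intro i
      refine Fin.lastCases ?_ (fun j => ?_) i
      · simpa using Nat.zero_le (a := _)
      · simp [Fin.init]
    have le4 : Fin.snoc (0 : Fin k → ℕ) (qq (Fin.last k)) ≤ qq := by
      intro i
      refine Fin.lastCases ?_ (fun j => ?_) i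
      · simp
      · simpa using Nat.zero_le (a := _)
    have hφcomp : y.P.map (homOfLE (zero_le (a := qq)))
        = y.P.map (homOfLE (zero_le (a := Fin.snoc (Fin.init qq) 0)))
          ≫ y.P.map (homOfLE le2) := by
      rw [← y.P.map_comp]; exact congrArg y.P.map (Subsingleton.elim _ _)
    have hψcomp : y.P.map (homOfLE (zero_le (a := qq)))
        = y.P.map (homOfLE (zero_le (a := Fin.snoc (0 : Fin k → ℕ) (qq (Fin.last k)))))
          ≫ y.P.map (homOfLE le4) := by
      rw [← y.P.map_comp]; exact congrArg y.P.map (Subsingleton.elim _ _)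
    have hdφ₂ : KG.deg (y.P.map (homOfLE le2)).1 = 0 := by
      funext j
      have h := congrFun (y.deg_eq le2) (Fin.castSucc j)
      simpa [towerKG, Fin.init] using h
    have hdψ₁ : KG.deg (y.P.map (homOfLE
        (zero_le (a := Fin.snoc (0 : Fin k → ℕ) (qq (Fin.last k)))))).1 = 0 := by
      funext j
      have h := congrFun (y.deg_eq
        (zero_le (a := Fin.snoc (0 : Fin k → ℕ) (qq (Fin.last k))))) (Fin.castSucc j)
      simpa [towerKG] using h
    have hlvl : (y.P.obj qq).lvl = qq (Fin.last k) := by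
      have h := congrFun (y.deg_eq le2) (Fin.last k)
      simp only [towerKG, Fin.snoc_last, Pi.sub_apply] at h
      have h0 := h1m.1
      have hmono := (y.P.map (homOfLE le2)).2.1
      omega
    have hdz2 := KG.deg_zero_eq (y.P.map (homOfLE le2)).1 hdφ₂
    have hdz1 := KG.deg_zero_eq (y.P.map (homOfLE
      (zero_le (a := Fin.snoc (0 : Fin k → ℕ) (qq (Fin.last k)))))).1 hdψ₁
    have hvert : (y.P.obj qq).vert = x.P.obj (Fin.init qq) :=
      hdz2.1.trans h1m.2.1
    have e1 : HEq (y.P.map (homOfLE (zero_le (a := qq)))).1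
        ((y.P.map (homOfLE (zero_le (a := Fin.snoc (Fin.init qq) 0)))).1) := by
      rw [hφcomp]
      exact heq_comp_id hdz2.1.symm _ hdz2.2 _
    have hval_q : HEq (y.P.map (homOfLE (zero_le (a := qq)))).1
        (x.P.map (homOfLE (zero_le (a := Fin.init qq)))) := e1.trans h1m.2.2
    have e2 : HEq (y.P.map (homOfLE (zero_le (a := qq)))).1
        (y.P.map (homOfLE le4)).1 := by
      rw [hψcomp]
      exact heq_id_comp hdz1.1.symm _ hdz1.2 _
    have hval_ψ₂ : HEq (y.P.map (homOfLE le4)).1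
        (x.P.map (homOfLE (zero_le (a := Fin.init qq)))) := e2.symm.trans hval_q
    have hobjq := TObj.grp_determined c H hH (y.P.map (homOfLE le4))
      (hy2 (qq (Fin.last k))) hlvl hvert hval_ψ₂
    refine ⟨?_, hval_q⟩
    rw [hobjq]
    exact (towerPath_obj_eq KG c H hH x g hg qq rfl rfl).symm
  refine InfPath.ext'' (fun qq => (main qq).1) (fun qq => ?_)
  refine TObj.hom_heq ((main 0).1) ((main qq).1) ?_
  refine (main qq).2.trans ?_
  rw [towerPath_map_val]
  exact x.map_heq rfl rfl _ _

end Main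
/-- Standing setup: `Λ` a connected row-finite `k`-graph with no sources,
`c : Λ → G` a cocycle, `(Hₙ)` a descending chain of finite-index normal subgroups with
`H₀ = G`, and `T = tgrphlim (Λ ×_{cₙ} G/Hₙ; pₙ)` the tower `(k+1)`-graph.  Fix
`x ∈ Λ^∞` and `g = (gₙ) ∈ varprojlim (G/Hₙ, qₙ)`.  For each `n` there is a unique
infinite path `(x, gₙ) ∈ Λₙ^∞` with `(x, gₙ)(0, m) = (x(0, m), cₙ(x(0, m))⁻¹gₙ)`; there
is a unique infinite path `x^g ∈ T^∞` with `x^g(0, (m, 0)) = ι₁(x(0, m))` and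
`x^g(n·e_{k+1}) = (x(0), gₙ)`; and moreover
`σ^{n·e_{k+1}}(x^g)(0, (m, 0)) = ιₙ((x, gₙ)(0, m))` for all `m ∈ ℕᵏ` and all `n`. -/
theorem stmt11 {k : ℕ} {Λ : Type} [SmallCategory Λ] (KG : KGraph k Λ)
    [IsConnected Λ]
    (hrow : ∀ (v : Λ) (d : Fin k → ℕ), Finite ((b : Λ) × {f : v ⟶ b // KG.deg f = d}))
    (hns : ∀ (v : Λ) (d : Fin k → ℕ), ∃ (b : Λ) (f : v ⟶ b), KG.deg f = d)
    {G : Type} [Group G] (c : Cocycle Λ G)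
    (H : ℕ → Subgroup G) [∀ i, (H i).Normal] (hH : Antitone H)
    (hfin : ∀ i, (H i).FiniteIndex) (hH0 : H 0 = ⊤)
    (x : InfPath KG) (g : ∀ i, G ⧸ H i)
    (hg : ∀ i, quotDown hH (Nat.le_succ i) (g (i + 1)) = g i) :
    (∀ n : ℕ, ∃! w : InfPath (skewKGraph KG (cq c (H n))),
      (∀ m : Fin k → ℕ, w.P.obj m =
        ⟨x.P.obj m, (↑(c.c (x.P.map (homOfLE (zero_le : 0 ≤ m)))) : G ⧸ H n)⁻¹ * g n⟩) ∧
      ∀ m : Fin k → ℕ,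
        HEq (w.P.map (homOfLE (zero_le : 0 ≤ m))).1 (x.P.map (homOfLE (zero_le : 0 ≤ m)))) ∧
    (∃! y : InfPath (towerKG KG c hH), IsXG KG c hH x g y) ∧
    (∀ y : InfPath (towerKG KG c hH), IsXG KG c hH x g y →
      ∀ (n : ℕ) (m : Fin k → ℕ),
        (y.shift (Fin.snoc (0 : Fin k → ℕ) n)).P.obj (Fin.snoc m 0) =
          ⟨n, x.P.obj m, (↑(c.c (x.P.map (homOfLE (zero_le : 0 ≤ m)))) : G ⧸ H n)⁻¹ * g n⟩ ∧
        HEq ((y.shift (Fin.snoc (0 : Fin k → ℕ) n)).P.map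
              (homOfLE (zero_le : 0 ≤ (Fin.snoc m 0 : Fin (k + 1) → ℕ)))).1
            (x.P.map (homOfLE (zero_le : 0 ≤ m)))) := by
  refine ⟨?_, ?_, ?_⟩
  · intro n
    refine ⟨skewPath KG c (H n) x (g n), ⟨fun m => rfl, fun m => HEq.rfl⟩, ?_⟩
    rintro w' ⟨ho, hm⟩
    exact InfPath.ext'' (fun m => ho m)
      (fun m => Skew.hom_heq (ho 0) (ho m) (hm m))
  · exact ⟨towerPath KG c H hH x g hg, towerPath_sat KG c H hH x g hg,
      fun y hy => tower_unique KG c H hH x g hg y hy⟩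
  · intro y hy n m
    have hyT := tower_unique KG c H hH x g hg y hy
    subst hyT
    constructor
    · have hn : ((Fin.snoc m 0 : Fin (k + 1) → ℕ)
          + (Fin.snoc (0 : Fin k → ℕ) n : Fin (k + 1) → ℕ)) (Fin.last k) = n := by
        simp [Pi.add_apply]
      have hm : Fin.init ((Fin.snoc m 0 : Fin (k + 1) → ℕ)
          + (Fin.snoc (0 : Fin k → ℕ) n : Fin (k + 1) → ℕ)) = m := by
        funext i; simp [Fin.init, Pi.add_apply]
      exact towerPath_obj_eq KG c H hH x g hg _ hn hm
    · have hp : Fin.init (((0 : Fin (k + 1) → ℕ))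
          + (Fin.snoc (0 : Fin k → ℕ) n : Fin (k + 1) → ℕ)) = 0 := by
        funext i; simp [Fin.init, Pi.add_apply]
      have hq : Fin.init ((Fin.snoc m 0 : Fin (k + 1) → ℕ)
          + (Fin.snoc (0 : Fin k → ℕ) n : Fin (k + 1) → ℕ)) = m := by
        funext i; simp [Fin.init, Pi.add_apply]
      exact x.map_heq hp hq _ (zero_le (a := m))
end

section
/- Let p_n : Λ_{n+1} → Λ_n (n ≥ 1) be a sequence of row-finite coverings of k-graphs with no sources, and equip varprojlim(Λ_i, p_i) with the topology generated by the cylinder sets. Then the coordinatewise composition map, defined on the set of composable pairs {(μ, ν) : s̃(μ) = r̃(ν)} ⊆ varprojlim(Λ_i, p_i) × varprojlim(Λ_i, p_i), is continuous. Indeed, for a cylinder set Z(λ_1, …, λ_j) with d(λ_1) = n, its inverse image under the composition map is the disjoint union, over p ∈ ℕ^k with p ≤ n, of the sets of composable pairs (μ, ν) with μ ∈ Z(λ_1(0,p), …, λ_j(0,p)) and ν ∈ Z(λ_1(p,n), …, λ_j(p,n)). -/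
open CategoryTheory

attribute [local instance 2000] Preorder.smallCategory

/-- A covering of `k`-graphs: a degree-preserving functor `p : Γ → Λ` which is surjective
on paths and restricts to bijections `vΓ → p(v)Λ` and `Γv → Λp(v)` for every vertex `v`. -/
structure IsCovering {k : ℕ} {Γ Λ : Type} [SmallCategory Γ] [SmallCategory Λ]
    (KGΓ : KGraph k Γ) (KGΛ : KGraph k Λ) (p : Γ ⥤ Λ) : Prop where
  deg_map : ∀ {a b : Γ} (f : a ⟶ b), KGΛ.deg (p.map f) = KGΓ.deg f
  surj : Function.Surjective
    (fun t : Σ (a b : Γ), a ⟶ b => (⟨p.obj t.1, p.obj t.2.1, p.map t.2.2⟩ : Σ (a b : Λ), a ⟶ b))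
  bij_out : ∀ v : Γ, Function.Bijective
    (fun t : Σ b : Γ, (v ⟶ b) => (⟨p.obj t.1, p.map t.2⟩ : Σ b' : Λ, (p.obj v ⟶ b')))
  bij_in : ∀ v : Γ, Function.Bijective
    (fun t : Σ a : Γ, (a ⟶ v) => (⟨p.obj t.1, p.map t.2⟩ : Σ a' : Λ, (a' ⟶ p.obj v)))

/-- The set of paths of `Λₙ`, as a type (with the discrete topology). -/
def Mor (Λ : ℕ → Type) [∀ n, SmallCategory (Λ n)] (n : ℕ) : Type :=
  Σ (a : Λ n) (b : Λ n), a ⟶ b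

instance (Λ : ℕ → Type) [∀ n, SmallCategory (Λ n)] (n : ℕ) :
    TopologicalSpace (Mor Λ n) := ⊥

instance (Λ : ℕ → Type) [∀ n, SmallCategory (Λ n)] (n : ℕ) :
    DiscreteTopology (Mor Λ n) := ⟨rfl⟩

/-- The map on paths induced by the covering `pₙ`. -/
def mapMor (Λ : ℕ → Type) [∀ n, SmallCategory (Λ n)] (p : ∀ n, Λ (n + 1) ⥤ Λ n)
    (n : ℕ) : Mor Λ (n + 1) → Mor Λ n :=
  fun t => ⟨(p n).obj t.1, (p n).obj t.2.1, (p n).map t.2.2⟩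

/-- The projective limit `varprojlim (Λᵢ, pᵢ)` of the path sets, topologised as a subspace
of the product `∏ᵢ Λᵢ` of the discrete path spaces. -/
def PLimSp (Λ : ℕ → Type) [∀ n, SmallCategory (Λ n)] (p : ∀ n, Λ (n + 1) ⥤ Λ n) : Type :=
  {σ : ∀ n, Mor Λ n // ∀ n, mapMor Λ p n (σ (n + 1)) = σ n}

instance (Λ : ℕ → Type) [∀ n, SmallCategory (Λ n)] (p : ∀ n, Λ (n + 1) ⥤ Λ n) :
    TopologicalSpace (PLimSp Λ p) :=
  inferInstanceAs (TopologicalSpace {σ : ∀ n, Mor Λ n // ∀ n, mapMor Λ p n (σ (n + 1)) = σ n})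

/-- The cylinder set `Z(τ₀, …, τⱼ)`. -/
def Cyl (Λ : ℕ → Type) [∀ n, SmallCategory (Λ n)] (p : ∀ n, Λ (n + 1) ⥤ Λ n)
    (j : ℕ) (τ : ∀ i, Mor Λ i) : Set (PLimSp Λ p) :=
  {σ | ∀ i ≤ j, σ.1 i = τ i}

/-- The family of cylinder sets (indexed by compatible finite prefixes of paths). -/
def CylFam (Λ : ℕ → Type) [∀ n, SmallCategory (Λ n)] (p : ∀ n, Λ (n + 1) ⥤ Λ n) :
    Set (Set (PLimSp Λ p)) :=
  {S | ∃ (j : ℕ) (τ : ∀ i, Mor Λ i),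
    (∀ i < j, mapMor Λ p i (τ (i + 1)) = τ i) ∧ S = Cyl Λ p j τ}

/-- The degree map `d̃` on `varprojlim (Λᵢ, pᵢ)`. -/
def dtSp {k : ℕ} (Λ : ℕ → Type) [∀ n, SmallCategory (Λ n)]
    (p : ∀ n, Λ (n + 1) ⥤ Λ n) (KGs : ∀ n, KGraph k (Λ n)) (σ : PLimSp Λ p) :
    Fin k → ℕ :=
  (KGs 0).deg (σ.1 0).2.2

/-- Composition of composable paths, as elements of the path set `Mor Λ n`. -/
def morComp (Λ : ℕ → Type) [∀ n, SmallCategory (Λ n)] {n : ℕ}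
    (f g : Mor Λ n) (h : f.2.1 = g.1) : Mor Λ n :=
  ⟨f.1, g.2.1, f.2.2 ≫ eqToHom h ≫ g.2.2⟩

lemma morComp_congr (Λ : ℕ → Type) [∀ n, SmallCategory (Λ n)] {n : ℕ}
    {f f' g g' : Mor Λ n} (hf : f = f') (hg : g = g') (h : f.2.1 = g.1) :
    morComp Λ f g h = morComp Λ f' g' (by rw [← hf, ← hg]; exact h) := by
  subst hf; subst hg; rfl

lemma mapMor_morComp (Λ : ℕ → Type) [∀ n, SmallCategory (Λ n)]
    (p : ∀ n, Λ (n + 1) ⥤ Λ n) (n : ℕ) (f g : Mor Λ (n + 1)) (h : f.2.1 = g.1) :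
    mapMor Λ p n (morComp Λ f g h) =
      morComp Λ (mapMor Λ p n f) (mapMor Λ p n g) (congrArg (p n).obj h) := by
  unfold mapMor morComp
  simp [eqToHom_map]
  rfl

/-- The set of composable pairs `{(μ, ν) : s̃(μ) = r̃(ν)}` in
`varprojlim (Λᵢ, pᵢ) × varprojlim (Λᵢ, pᵢ)`. -/
def CompPairs (Λ : ℕ → Type) [∀ n, SmallCategory (Λ n)] (p : ∀ n, Λ (n + 1) ⥤ Λ n) :
    Set (PLimSp Λ p × PLimSp Λ p) :=
  {x | ∀ n, (x.1.1 n).2.1 = (x.2.1 n).1}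

/-- The coordinatewise composition map on composable pairs. -/
def compMap (Λ : ℕ → Type) [∀ n, SmallCategory (Λ n)] (p : ∀ n, Λ (n + 1) ⥤ Λ n)
    (x : ↥(CompPairs Λ p)) : PLimSp Λ p :=
  ⟨fun n => morComp Λ (x.1.1.1 n) (x.1.2.1 n) (x.2 n), by
    intro n
    have hμ := x.1.1.2 n
    have hν := x.1.2.2 n
    rw [mapMor_morComp]
    exact morComp_congr Λ hμ hν _⟩

lemma deg_morComp (Λ : ℕ → Type) [∀ n, SmallCategory (Λ n)] {k n : ℕ}
    (KG : KGraph k (Λ n)) (f g : Mor Λ n) (h : f.2.1 = g.1) :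
    KG.deg (morComp Λ f g h).2.2 = KG.deg f.2.2 + KG.deg g.2.2 := by
  obtain ⟨a, b, fm⟩ := f; obtain ⟨b', c, gm⟩ := g
  dsimp at h; subst h
  simp [morComp, KG.deg_comp]

lemma morComp_inj (Λ : ℕ → Type) [∀ n, SmallCategory (Λ n)] {k n : ℕ}
    (KG : KGraph k (Λ n)) {f g f' g' : Mor Λ n} (h : f.2.1 = g.1) (h' : f'.2.1 = g'.1)
    (hd : KG.deg f.2.2 = KG.deg f'.2.2)
    (he : morComp Λ f g h = morComp Λ f' g' h') : f = f' ∧ g = g' := by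
  obtain ⟨a1, b1, f1⟩ := f; obtain ⟨b1', c1, g1⟩ := g
  dsimp at h; subst h
  obtain ⟨a2, b2, f2⟩ := f'; obtain ⟨b2', c2, g2⟩ := g'
  dsimp at h'; subst h'
  simp only [morComp, eqToHom_refl, Category.id_comp] at he
  obtain ⟨rfl, he2⟩ := Sigma.mk.inj_iff.mp he
  obtain ⟨rfl, he3⟩ := Sigma.mk.inj_iff.mp (eq_of_heq he2)
  have hcomp : f1 ≫ g1 = f2 ≫ g2 := eq_of_heq he3
  dsimp at hd
  obtain ⟨t, ht, hu⟩ := KG.factor (f1 ≫ g1) (KG.deg f1) (KG.deg g1) (KG.deg_comp f1 g1)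
  have hdg : KG.deg g2 = KG.deg g1 := by
    have h5 := KG.deg_comp f1 g1
    rw [hcomp, KG.deg_comp, ← hd] at h5
    exact add_left_cancel h5
  have h1 : (⟨b1, f1, g1⟩ : Σ c : Λ n, (a1 ⟶ c) × (c ⟶ c1)) = t := hu _ ⟨rfl, rfl, rfl⟩
  have h2 : (⟨b2, f2, g2⟩ : Σ c : Λ n, (a1 ⟶ c) × (c ⟶ c1)) = t :=
    hu _ ⟨hd.symm, hdg, hcomp.symm⟩
  obtain ⟨rfl, he4⟩ := Sigma.mk.inj_iff.mp (h1.trans h2.symm)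
  have h6 := eq_of_heq he4
  have hf : f1 = f2 := congrArg Prod.fst h6
  have hg : g1 = g2 := congrArg Prod.snd h6
  subst hf; subst hg
  exact ⟨rfl, rfl⟩

lemma deg_const (Λ : ℕ → Type) [∀ n, SmallCategory (Λ n)] {k : ℕ}
    (p : ∀ n, Λ (n + 1) ⥤ Λ n) (KGs : ∀ n, KGraph k (Λ n))
    (hcov : ∀ n, IsCovering (KGs (n + 1)) (KGs n) (p n))
    (σ : PLimSp Λ p) : ∀ i, (KGs i).deg (σ.1 i).2.2 = (KGs 0).deg (σ.1 0).2.2 := by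
  intro i
  induction i with
  | zero => rfl
  | succ i ih =>
    have h1 : (KGs i).deg (σ.1 i).2.2 = (KGs (i + 1)).deg (σ.1 (i + 1)).2.2 := by
      rw [← σ.2 i]
      exact (hcov i).deg_map _
    rw [← h1, ih]

lemma deg_const_tau (Λ : ℕ → Type) [∀ n, SmallCategory (Λ n)] {k : ℕ}
    (p : ∀ n, Λ (n + 1) ⥤ Λ n) (KGs : ∀ n, KGraph k (Λ n))
    (hcov : ∀ n, IsCovering (KGs (n + 1)) (KGs n) (p n))
    (τ : ∀ i, Mor Λ i) (j : ℕ) (hτ : ∀ i < j, mapMor Λ p i (τ (i + 1)) = τ i) :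
    ∀ i ≤ j, (KGs i).deg (τ i).2.2 = (KGs 0).deg (τ 0).2.2 := by
  intro i
  induction i with
  | zero => intro _; rfl
  | succ i ih =>
    intro hij
    have hlt : i < j := Nat.lt_of_succ_le hij
    have h1 : (KGs i).deg (τ i).2.2 = (KGs (i + 1)).deg (τ (i + 1)).2.2 := by
      rw [← hτ i hlt]
      exact (hcov i).deg_map _
    rw [← h1, ih hlt.le]

/-- For a sequence of row-finite coverings of `k`-graphs with no sources,
the coordinatewise composition map, defined on the set of composable pairs in
`varprojlim (Λᵢ, pᵢ) × varprojlim (Λᵢ, pᵢ)`, is continuous; and the preimage of a cylinder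
set `Z(τ₀, …, τⱼ)` with `d(τ₀) = n` is the disjoint union, over `q ≤ n`, of the sets of
composable pairs of cylinders determined by the (coordinatewise, unique) factorisations
`τᵢ = τᵢ(0, q)·τᵢ(q, n)`. -/
theorem stmt18 {k : ℕ} (Λ : ℕ → Type) [∀ n, SmallCategory (Λ n)]
    (p : ∀ n, Λ (n + 1) ⥤ Λ n) (KGs : ∀ n, KGraph k (Λ n))
    (hcov : ∀ n, IsCovering (KGs (n + 1)) (KGs n) (p n))
    (hfib : ∀ (n : ℕ) (v : Λ n), Finite {w : Λ (n + 1) // (p n).obj w = v})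
    (hrow : ∀ (n : ℕ) (v : Λ n) (d : Fin k → ℕ),
      Finite ((b : Λ n) × {f : v ⟶ b // (KGs n).deg f = d}))
    (hns : ∀ (n : ℕ) (v : Λ n) (d : Fin k → ℕ),
      ∃ (b : Λ n) (f : v ⟶ b), (KGs n).deg f = d) :
    Continuous (compMap Λ p) ∧
    ∀ (j : ℕ) (τ : ∀ i, Mor Λ i), (∀ i < j, mapMor Λ p i (τ (i + 1)) = τ i) →
      ∀ n : Fin k → ℕ, (KGs 0).deg (τ 0).2.2 = n →
      ∃ μF νF : (Fin k → ℕ) → ∀ i, Mor Λ i,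
        (∀ q : Fin k → ℕ, q ≤ n → ∀ i, i ≤ j →
          (KGs i).deg ((μF q i).2.2) = q ∧
          (KGs i).deg ((νF q i).2.2) = n - q ∧
          ∃ h : (μF q i).2.1 = (νF q i).1, morComp Λ (μF q i) (νF q i) h = τ i) ∧
        (compMap Λ p ⁻¹' Cyl Λ p j τ =
          ⋃ (q : Fin k → ℕ) (_ : q ≤ n),
            {x : ↥(CompPairs Λ p) |
              (∀ i ≤ j, x.1.1.1 i = μF q i) ∧ ∀ i ≤ j, x.1.2.1 i = νF q i}) ∧
        ∀ q q' : Fin k → ℕ, q ≤ n → q' ≤ n → q ≠ q' →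
          Disjoint
            {x : ↥(CompPairs Λ p) |
              (∀ i ≤ j, x.1.1.1 i = μF q i) ∧ ∀ i ≤ j, x.1.2.1 i = νF q i}
            {x : ↥(CompPairs Λ p) |
              (∀ i ≤ j, x.1.1.1 i = μF q' i) ∧ ∀ i ≤ j, x.1.2.1 i = νF q' i} := by
    classical
  constructor
  · -- continuity
    have hcont : Continuous fun x : ↥(CompPairs Λ p) =>
        (fun i => morComp Λ (x.1.1.1 i) (x.1.2.1 i) (x.2 i) : ∀ i, Mor Λ i) := by
      refine continuous_pi fun i => ?_
      have hF : (fun x : ↥(CompPairs Λ p) => morComp Λ (x.1.1.1 i) (x.1.2.1 i) (x.2 i))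
          = (fun fg : Mor Λ i × Mor Λ i =>
              if h : fg.1.2.1 = fg.2.1 then morComp Λ fg.1 fg.2 h else fg.1)
            ∘ (fun x : ↥(CompPairs Λ p) => (x.1.1.1 i, x.1.2.1 i)) := by
        funext x
        exact (dif_pos (x.2 i)).symm
      rw [hF]
      refine continuous_of_discreteTopology.comp ?_
      refine Continuous.prodMk ?_ ?_
      · exact (continuous_apply i).comp
          (continuous_subtype_val.comp (continuous_fst.comp continuous_subtype_val))
      · exact (continuous_apply i).comp
          (continuous_subtype_val.comp (continuous_snd.comp continuous_subtype_val))
    exact Continuous.subtype_mk hcont fun x => (compMap Λ p x).2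
  · intro j τ hτ n hn
    have hτdeg : ∀ i ≤ j, (KGs i).deg (τ i).2.2 = n := by
      intro i hi
      rw [deg_const_tau Λ p KGs hcov τ j hτ i hi, hn]
    have hfac : ∀ (q : Fin k → ℕ) (i : ℕ), ∃ fg : Mor Λ i × Mor Λ i,
        q ≤ n → i ≤ j → ∃ hc : fg.1.2.1 = fg.2.1,
          (KGs i).deg fg.1.2.2 = q ∧ (KGs i).deg fg.2.2.2 = n - q ∧
          morComp Λ fg.1 fg.2 hc = τ i := by
      intro q i
      by_cases hqi : q ≤ n ∧ i ≤ j
      · obtain ⟨hq, hi⟩ := hqi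
        obtain ⟨⟨c, fm, gm⟩, ⟨hdf, hdg, hcm⟩, -⟩ :=
          (KGs i).factor (τ i).2.2 q (n - q) (by
            rw [hτdeg i hi]
            funext x
            have hx := Pi.le_def.mp hq x
            simp only [Pi.add_apply, Pi.sub_apply]
            omega)
        refine ⟨(⟨(τ i).1, c, fm⟩, ⟨c, (τ i).2.1, gm⟩), fun _ _ => ⟨rfl, hdf, hdg, ?_⟩⟩
        show (⟨(τ i).1, (τ i).2.1, fm ≫ eqToHom rfl ≫ gm⟩ : Mor Λ i) = τ i
        rw [eqToHom_refl, Category.id_comp, hcm]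
        rfl
      · exact ⟨(τ i, τ i), fun h1 h2 => absurd ⟨h1, h2⟩ hqi⟩
    choose FG hFG using hfac
    refine ⟨fun q i => (FG q i).1, fun q i => (FG q i).2, ?_, ?_, ?_⟩
    · intro q hq i hi
      obtain ⟨hc, h1, h2, h3⟩ := hFG q i hq hi
      exact ⟨h1, h2, hc, h3⟩
    · ext x
      simp only [Set.mem_preimage, Set.mem_iUnion, Set.mem_setOf_eq]
      constructor
      · intro hx
        have hx' : ∀ i ≤ j, morComp Λ (x.1.1.1 i) (x.1.2.1 i) (x.2 i) = τ i :=
          fun i hi => hx i hi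
        have h0 := deg_morComp Λ (KGs 0) (x.1.1.1 0) (x.1.2.1 0) (x.2 0)
        rw [hx' 0 (Nat.zero_le j), hn] at h0
        set q := (KGs 0).deg (x.1.1.1 0).2.2 with hq0
        have hq : q ≤ n := le_self_add.trans_eq h0.symm
        have hdq : ∀ i, (KGs i).deg (x.1.1.1 i).2.2 = q :=
          fun i => deg_const Λ p KGs hcov x.1.1 i
        refine ⟨q, hq, fun i hi => ?_, fun i hi => ?_⟩
        · obtain ⟨hc, h1, h2, h3⟩ := hFG q i hq hi
          exact (morComp_inj Λ (KGs i) (x.2 i) hc ((hdq i).trans h1.symm)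
            ((hx' i hi).trans h3.symm)).1
        · obtain ⟨hc, h1, h2, h3⟩ := hFG q i hq hi
          exact (morComp_inj Λ (KGs i) (x.2 i) hc ((hdq i).trans h1.symm)
            ((hx' i hi).trans h3.symm)).2
      · rintro ⟨q, hq, hμ, hν⟩
        intro i hi
        obtain ⟨hc, h1, h2, h3⟩ := hFG q i hq hi
        show morComp Λ (x.1.1.1 i) (x.1.2.1 i) (x.2 i) = τ i
        exact (morComp_congr Λ (hμ i hi) (hν i hi) (x.2 i)).trans h3
    · intro q q' hq hq' hne
      rw [Set.disjoint_left]
      rintro x ⟨hμ, -⟩ ⟨hμ', -⟩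
      obtain ⟨hc, h1, -, -⟩ := hFG q 0 hq (Nat.zero_le j)
      obtain ⟨hc', h1', -, -⟩ := hFG q' 0 hq' (Nat.zero_le j)
      have hx0 : (FG q 0).1 = (FG q' 0).1 :=
        (hμ 0 (Nat.zero_le j)).symm.trans (hμ' 0 (Nat.zero_le j))
      exact hne (h1.symm.trans
        ((congrArg (fun m : Mor Λ 0 => (KGs 0).deg m.2.2) hx0).trans h1'))
end
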